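/- For a standard Poisson process N with compensated process L_t = N_t - t, and f ∈ L²([0,T]), the random variable (∫₀^T f(t) dL_t)² is square integrable if and only if f ∈ L⁴([0,T]). -/

import Mathlib

open MeasureTheory Filter Set
open scoped ENNReal NNReal

namespace PoissonSqAux

lemma norm_g_le (x : ℝ) :
    ‖Complex.exp (Complex.I * x) - 1 - Complex.I * x‖ ≤ 3 * x ^ 2 := by
  have hnx : ‖(Complex.I * (x:ℂ))‖ = |x| := by
    rw [norm_mul, Complex.norm_I, one_mul, Complex.norm_real, Real.norm_eq_abs]
  rcases le_or_gt (|x|) 1 with h | h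
  · have := Complex.norm_exp_sub_one_sub_id_le (x := Complex.I * x) (by
      rw [hnx]; exact h)
    rw [hnx] at this
    calc ‖Complex.exp (Complex.I * x) - 1 - Complex.I * x‖ ≤ |x| ^ 2 := this
      _ = x ^ 2 := sq_abs x
      _ ≤ 3 * x ^ 2 := by nlinarith [sq_nonneg x]
  · have h1 : ‖Complex.exp (Complex.I * x)‖ = 1 := by
      rw [Complex.norm_exp]
      simp
    have hx2 : |x| ≤ x ^ 2 := by nlinarith [sq_abs x, abs_nonneg x]
    calc ‖Complex.exp (Complex.I * x) - 1 - Complex.I * x‖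
        ≤ ‖Complex.exp (Complex.I * x) - 1‖ + ‖Complex.I * (x:ℂ)‖ := norm_sub_le _ _
      _ ≤ (‖Complex.exp (Complex.I * x)‖ + ‖(1:ℂ)‖) + |x| := by
          gcongr ?_ + ?_
          · exact norm_sub_le _ _
          · exact hnx.le
      _ = 2 + |x| := by rw [h1]; norm_num
      _ ≤ 3 * x ^ 2 := by nlinarith [sq_abs x, abs_nonneg x]

lemma one_sub_cos_le (x : ℝ) : 1 - Real.cos x ≤ x ^ 2 / 2 := by
  have h1 : Real.cos x = 2 * Real.cos (x/2) ^ 2 - 1 := by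
    have := Real.cos_two_mul (x/2)
    rw [show 2 * (x/2) = x by ring] at this
    linarith
  have h2 := Real.sin_sq_add_cos_sq (x/2)
  have h3 : Real.sin (x/2) ^ 2 ≤ (x/2) ^ 2 := by
    have := Real.abs_sin_le_abs (x := x/2)
    calc Real.sin (x/2) ^ 2 = |Real.sin (x/2)| ^ 2 := (sq_abs _).symm
      _ ≤ |x/2| ^ 2 := pow_le_pow_left₀ (abs_nonneg _) Real.abs_sin_le_abs 2
      _ = (x/2) ^ 2 := sq_abs _
  nlinarith

lemma one_sub_cos_sq_le (x : ℝ) : (1 - Real.cos x) ^ 2 ≤ x ^ 4 / 4 := by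
  have h1 := one_sub_cos_le x
  have h2 : (0:ℝ) ≤ 1 - Real.cos x := by nlinarith [Real.cos_le_one x]
  nlinarith

lemma cos_identity (θ : ℝ) :
    2 * (1 - Real.cos θ) ^ 2 = 3 - 4 * Real.cos θ + Real.cos (2 * θ) := by
  rw [Real.cos_two_mul]; ring

end PoissonSqAux

namespace PoissonSqAux2

lemma tendsto_sin_div : Tendsto (fun u : ℝ => Real.sin u / u) (nhdsWithin 0 {0}ᶜ) (nhds 1) := by
  have h := hasDerivAt_iff_tendsto_slope.mp (Real.hasDerivAt_sin 0)
  rw [Real.cos_zero] at h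
  refine h.congr' ?_
  filter_upwards [self_mem_nhdsWithin] with u hu
  simp [slope_def_field, div_eq_iff, hu]

lemma tendsto_one_sub_cos_div :
    Tendsto (fun t : ℝ => (1 - Real.cos t) / t ^ 2) (nhdsWithin 0 {0}ᶜ) (nhds (1/2)) := by
  have hmap : Tendsto (fun t : ℝ => t / 2) (nhdsWithin 0 {0}ᶜ) (nhdsWithin 0 {0}ᶜ) := by
    rw [tendsto_nhdsWithin_iff]
    constructor
    · have h0 : Tendsto (fun t : ℝ => t / 2) (nhds (0:ℝ)) (nhds ((0:ℝ)/2)) :=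
        (tendsto_id (α := ℝ)).div_const (2:ℝ)
      rw [zero_div] at h0
      exact h0.mono_left nhdsWithin_le_nhds
    · filter_upwards [self_mem_nhdsWithin] with u hu
      simp only [Set.mem_compl_iff, Set.mem_singleton_iff] at hu ⊢
      intro hc; exact hu (by linarith)
  have h1 : Tendsto (fun t : ℝ => Real.sin (t/2) / (t/2)) (nhdsWithin 0 {0}ᶜ) (nhds 1) :=
    tendsto_sin_div.comp hmap
  have h2 : Tendsto (fun t : ℝ => (1/2) * (Real.sin (t/2) / (t/2)) ^ 2)
      (nhdsWithin 0 {0}ᶜ) (nhds ((1/2) * 1 ^ 2)) := ((h1.pow 2).const_mul _)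
  rw [show ((1:ℝ)/2) * 1 ^ 2 = 1/2 by norm_num] at h2
  refine h2.congr' ?_
  filter_upwards [self_mem_nhdsWithin] with t ht
  simp only [Set.mem_compl_iff, Set.mem_singleton_iff] at ht
  have hcos : 1 - Real.cos t = 2 * Real.sin (t/2) ^ 2 := by
    have h1' : Real.cos t = 2 * Real.cos (t/2) ^ 2 - 1 := by
      have := Real.cos_two_mul (t/2)
      rw [show 2 * (t/2) = t by ring] at this
      linarith
    have h2' := Real.sin_sq_add_cos_sq (t/2)
    nlinarith
  field_simp [hcos]
  rw [hcos]

lemma tendsto_n4 (x : ℝ) :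
    Tendsto (fun n : ℕ => (n:ℝ)^4 * (1 - Real.cos ((1/(n:ℝ)) * x)) ^ 2) atTop
      (nhds (x ^ 4 / 4)) := by
  rcases eq_or_ne x 0 with rfl | hx
  · simpa using tendsto_const_nhds (x := (0:ℝ)) (f := atTop (α := ℕ))
  · have hmap : Tendsto (fun n : ℕ => (1/(n:ℝ)) * x) atTop (nhdsWithin 0 {0}ᶜ) := by
      rw [tendsto_nhdsWithin_iff]
      constructor
      · simpa using (tendsto_one_div_atTop_nhds_zero_nat).mul_const x
      · filter_upwards [eventually_gt_atTop 0] with n hn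
        have : (n:ℝ) ≠ 0 := Nat.cast_ne_zero.mpr hn.ne'
        simp only [Set.mem_compl_iff, Set.mem_singleton_iff]
        positivity
    have h1 : Tendsto (fun n : ℕ => x^4 * ((1 - Real.cos ((1/(n:ℝ))*x)) / ((1/(n:ℝ))*x)^2) ^ 2)
        atTop (nhds (x^4 * (1/2)^2)) :=
      (((tendsto_one_sub_cos_div.comp hmap).pow 2).const_mul _)
    rw [show x^4 * ((1:ℝ)/2)^2 = x^4/4 by ring] at h1
    refine h1.congr' ?_
    filter_upwards [eventually_gt_atTop 0] with n hn
    have hn' : (n:ℝ) ≠ 0 := Nat.cast_ne_zero.mpr hn.ne'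
    field_simp

lemma fatou_pow4 {α : Type*} [MeasurableSpace α] (ν : Measure α) (g : α → ℝ)
    (hg : AEMeasurable g ν) (K : ℝ)
    (h : ∀ᶠ n : ℕ in atTop,
      ∫⁻ x, ENNReal.ofReal ((n:ℝ)^4 * (1 - Real.cos ((1/(n:ℝ)) * g x)) ^ 2) ∂ν
        ≤ ENNReal.ofReal K) :
    ∫⁻ x, ENNReal.ofReal ((g x) ^ 4 / 4) ∂ν ≤ ENNReal.ofReal K := by
  have hlim : ∀ x : ℝ,
      Tendsto (fun n : ℕ => ENNReal.ofReal ((n:ℝ)^4 * (1 - Real.cos ((1/(n:ℝ)) * x)) ^ 2))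
        atTop (nhds (ENNReal.ofReal (x ^ 4 / 4))) :=
    fun x => (ENNReal.continuous_ofReal.tendsto _).comp (tendsto_n4 x)
  have hmeas : ∀ n : ℕ, AEMeasurable
      (fun x => ENNReal.ofReal ((n:ℝ)^4 * (1 - Real.cos ((1/(n:ℝ)) * g x)) ^ 2)) ν := by
    intro n
    apply ENNReal.measurable_ofReal.comp_aemeasurable
    exact (aemeasurable_const.mul
      (((Real.measurable_cos.comp_aemeasurable (hg.const_mul _)).const_sub 1).pow_const 2))
  calc ∫⁻ x, ENNReal.ofReal ((g x) ^ 4 / 4) ∂ν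
      = ∫⁻ x, liminf (fun n : ℕ =>
          ENNReal.ofReal ((n:ℝ)^4 * (1 - Real.cos ((1/(n:ℝ)) * g x)) ^ 2)) atTop ∂ν := by
        refine lintegral_congr fun x => ?_
        exact ((hlim (g x)).liminf_eq).symm
    _ ≤ liminf (fun n : ℕ => ∫⁻ x,
          ENNReal.ofReal ((n:ℝ)^4 * (1 - Real.cos ((1/(n:ℝ)) * g x)) ^ 2) ∂ν) atTop :=
        lintegral_liminf_le' hmeas
    _ ≤ liminf (fun _ : ℕ => ENNReal.ofReal K) atTop := liminf_le_liminf h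
    _ = ENNReal.ofReal K := liminf_const _

end PoissonSqAux2

namespace PoissonSqAux3

lemma memLp4_iff_integrable {α : Type*} [MeasurableSpace α] {ν : Measure α} {g : α → ℝ}
    (hg : AEStronglyMeasurable g ν) :
    MemLp g 4 ν ↔ Integrable (fun x => g x ^ 4) ν := by
  have h := memLp_norm_rpow_iff (p := 4) (q := 2) hg (by norm_num) (by norm_num)
  have e1 : (fun x : α => ‖g x‖ ^ ((2:ℝ≥0∞)).toReal) = fun x => g x ^ 2 := by
    funext x
    rw [show ((2:ℝ≥0∞)).toReal = ((2:ℕ):ℝ) by norm_num, Real.rpow_natCast,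
      Real.norm_eq_abs, sq_abs]
  have e2 : (4:ℝ≥0∞)/2 = 2 := by
    rw [show (4:ℝ≥0∞) = 2 * 2 by norm_num, mul_div_assoc,
      ENNReal.div_self (by norm_num) (by norm_num), mul_one]
  rw [e1, e2] at h
  rw [← h, memLp_two_iff_integrable_sq ((hg.aemeasurable.pow_const 2).aestronglyMeasurable)]
  constructor <;> intro hi <;> [skip; skip] <;>
  · refine hi.congr ?_
    filter_upwards with x
    ring

lemma integrable_of_bounded {α : Type*} [MeasurableSpace α] {ν : Measure α} [IsFiniteMeasure ν]
    {g : α → ℝ} (hg : AEStronglyMeasurable g ν) (C : ℝ) (h : ∀ x, |g x| ≤ C) :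
    Integrable g ν := by
  refine Integrable.mono' (integrable_const C) hg ?_
  filter_upwards with x
  simpa [Real.norm_eq_abs] using h x

lemma abs_cos_sub_one_le (θ : ℝ) : |Real.cos θ - 1| ≤ 2 := by
  have h1 := Real.neg_one_le_cos θ
  have h2 := Real.cos_le_one θ
  rw [abs_le]; constructor <;> linarith

lemma sq_one_sub_cos_bounded (θ : ℝ) : |(1 - Real.cos θ) ^ 2| ≤ 4 := by
  have h1 := Real.cos_le_one θ
  have h2 := Real.neg_one_le_cos θ
  rw [abs_of_nonneg (sq_nonneg _)]
  nlinarith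

end PoissonSqAux3

open PoissonSqAux PoissonSqAux2 PoissonSqAux3

/-- For a standard Poisson process `N` with compensated process
`L_t = N_t - t` and `f ∈ L²((0,T])`, the stochastic integral `S = ∫₀^T f(t) dL_t`
(characterized by its characteristic function
`E[e^{icS}] = exp(∫₀^T (e^{ic f(t)} − 1 − ic f(t)) dt)`), satisfies:
`S²` is square integrable iff `f ∈ L⁴((0,T])`. -/
theorem poisson_integral_sq_memL2_iff_L4
    {Ω : Type*} [MeasurableSpace Ω] (μ : Measure Ω) [IsProbabilityMeasure μ]
    (T : ℝ) (hT : 0 < T) (f : ℝ → ℝ)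
    (hf : MemLp f 2 (volume.restrict (Set.Ioc 0 T)))
    (S : Ω → ℝ) (hS : Measurable S)
    (hchar : ∀ c : ℝ,
      ∫ ω, Complex.exp (Complex.I * (c * S ω : ℝ)) ∂μ =
        Complex.exp (∫ t in Set.Ioc (0:ℝ) T,
          (Complex.exp (Complex.I * (c * f t : ℝ)) - 1 - Complex.I * (c * f t : ℝ)))) :
    MemLp (fun ω => (S ω) ^ 2) 2 μ ↔ MemLp f 4 (volume.restrict (Set.Ioc 0 T)) := by
  have hφcont : Continuous (fun x : ℝ => Complex.exp (Complex.I * x) - 1 - Complex.I * x) := by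
    continuity
  set ν := volume.restrict (Set.Ioc (0:ℝ) T) with hνdef
  haveI hνfin : IsFiniteMeasure ν := by
    constructor
    rw [hνdef, Measure.restrict_apply_univ, Real.volume_Ioc]
    exact ENNReal.ofReal_lt_top
  have hfm : AEStronglyMeasurable f ν := hf.1
  have hf2 : Integrable (fun t => f t ^ 2) ν := hf.integrable_sq
  set M : ℝ := ∫ t, f t ^ 2 ∂ν with hMdef
  have hM0 : 0 ≤ M := integral_nonneg fun t => sq_nonneg _
  have hgint : ∀ c : ℝ, Integrable
      (fun t => Complex.exp (Complex.I * (c * f t : ℝ)) - 1 - Complex.I * (c * f t : ℝ)) ν := by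
    intro c
    refine Integrable.mono' (hf2.const_mul (3 * c ^ 2))
      (hφcont.comp_aestronglyMeasurable (hfm.const_mul c)) ?_
    filter_upwards with t
    calc ‖Complex.exp (Complex.I * (c * f t : ℝ)) - 1 - Complex.I * (c * f t : ℝ)‖
        ≤ 3 * (c * f t) ^ 2 := norm_g_le _
      _ = 3 * c ^ 2 * f t ^ 2 := by ring
  set ψ : ℝ → ℂ := fun c => ∫ t, (Complex.exp (Complex.I * (c * f t : ℝ)) - 1
      - Complex.I * (c * f t : ℝ)) ∂ν with hψdef
  have hchar' : ∀ c : ℝ, ∫ ω, Complex.exp (Complex.I * (c * S ω : ℝ)) ∂μ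
      = Complex.exp (ψ c) := fun c => hchar c
  have hψnorm : ∀ c : ℝ, ‖ψ c‖ ≤ 3 * c ^ 2 * M := by
    intro c
    calc ‖ψ c‖ ≤ ∫ t, ‖Complex.exp (Complex.I * (c * f t : ℝ)) - 1
          - Complex.I * (c * f t : ℝ)‖ ∂ν := norm_integral_le_integral_norm _
      _ ≤ ∫ t, 3 * c ^ 2 * f t ^ 2 ∂ν := by
          refine integral_mono (hgint c).norm (hf2.const_mul _) fun t => ?_
          calc ‖Complex.exp (Complex.I * (c * f t : ℝ)) - 1 - Complex.I * (c * f t : ℝ)‖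
              ≤ 3 * (c * f t) ^ 2 := norm_g_le _
            _ = 3 * c ^ 2 * f t ^ 2 := by ring
      _ = 3 * c ^ 2 * M := by rw [hMdef]; exact integral_const_mul _ _
  have hexp_int : ∀ c : ℝ, Integrable (fun ω => Complex.exp (Complex.I * (c * S ω : ℝ))) μ := by
    intro c
    have hm : Measurable fun ω => Complex.I * ((c * S ω : ℝ) : ℂ) :=
      (Complex.measurable_ofReal.comp (hS.const_mul c)).const_mul Complex.I
    refine Integrable.mono' (integrable_const (1:ℝ))
      (Complex.continuous_exp.measurable.comp hm).aestronglyMeasurable ?_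
    filter_upwards with ω
    rw [Complex.norm_exp]
    simp
  have hre : ∀ x : ℝ, (Complex.exp (Complex.I * x)).re = Real.cos x := by
    intro x; rw [mul_comm]; exact Complex.exp_ofReal_mul_I_re x
  have hcos_int : ∀ c : ℝ, Integrable (fun ω => Real.cos (c * S ω)) μ :=
    fun c => integrable_of_bounded
      (Real.measurable_cos.comp (hS.const_mul c)).aestronglyMeasurable 1
      (fun ω => Real.abs_cos_le_one _)
  have hcosS : ∀ c : ℝ, ∫ ω, Real.cos (c * S ω) ∂μ = (Complex.exp (ψ c)).re := by
    intro c
    have h1 : ∫ ω, Real.cos (c * S ω) ∂μ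
        = ∫ ω, RCLike.re (Complex.exp (Complex.I * (c * S ω : ℝ))) ∂μ := by
      refine integral_congr_ae (Eventually.of_forall fun ω => ?_)
      exact (hre _).symm
    rw [h1, integral_re (hexp_int c), hchar' c, RCLike.re_to_complex]
  have hQint : ∀ c : ℝ, Integrable (fun ω => (1 - Real.cos (c * S ω)) ^ 2) μ :=
    fun c => integrable_of_bounded
      (((Real.measurable_cos.comp (hS.const_mul c)).const_sub 1).pow_const 2).aestronglyMeasurable
      4 (fun ω => sq_one_sub_cos_bounded _)
  have hqint : ∀ c : ℝ, Integrable (fun t => (1 - Real.cos (c * f t)) ^ 2) ν := by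
    intro c
    refine integrable_of_bounded ?_ 4 (fun t => sq_one_sub_cos_bounded _)
    exact ((((Real.measurable_cos.comp_aemeasurable
      (hfm.aemeasurable.const_mul c)).const_sub 1).pow_const 2)).aestronglyMeasurable
  have hA : ∀ c : ℝ, 2 * (∫ ω, (1 - Real.cos (c * S ω)) ^ 2 ∂μ)
      = 3 - 4 * (Complex.exp (ψ c)).re + (Complex.exp (ψ (2*c))).re := by
    intro c
    have e1 : ∀ ω, 2 * (1 - Real.cos (c * S ω)) ^ 2
        = (3 - 4 * Real.cos (c * S ω)) + Real.cos ((2*c) * S ω) := by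
      intro ω
      rw [show (2*c) * S ω = 2 * (c * S ω) by ring, cos_identity]
      try ring
    calc 2 * (∫ ω, (1 - Real.cos (c * S ω)) ^ 2 ∂μ)
        = ∫ ω, 2 * (1 - Real.cos (c * S ω)) ^ 2 ∂μ := (integral_const_mul _ _).symm
      _ = ∫ ω, ((3 - 4 * Real.cos (c * S ω)) + Real.cos ((2*c) * S ω)) ∂μ := by
          exact integral_congr_ae (Eventually.of_forall e1)
      _ = (∫ ω, (3 - 4 * Real.cos (c * S ω)) ∂μ) + ∫ ω, Real.cos ((2*c) * S ω) ∂μ := by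
          exact integral_add ((integrable_const 3).sub ((hcos_int c).const_mul 4)) (hcos_int (2*c))
      _ = (3 - 4 * ∫ ω, Real.cos (c * S ω) ∂μ) + ∫ ω, Real.cos ((2*c) * S ω) ∂μ := by
          rw [integral_sub (integrable_const (3:ℝ)) ((hcos_int c).const_mul 4),
            integral_const_mul, integral_const, probReal_univ, one_smul]
      _ = 3 - 4 * (Complex.exp (ψ c)).re + (Complex.exp (ψ (2*c))).re := by
          rw [hcosS c, hcosS (2*c)]
          try ring
  have hB : ∀ c : ℝ, 2 * (∫ t, (1 - Real.cos (c * f t)) ^ 2 ∂ν)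
      = (ψ (2*c) - 4 * ψ c).re := by
    intro c
    have hrepsi : ∀ c' : ℝ, (ψ c').re = ∫ t, (Real.cos (c' * f t) - 1) ∂ν := by
      intro c'
      have h1 : ∫ t, (Real.cos (c' * f t) - 1) ∂ν
          = ∫ t, RCLike.re (Complex.exp (Complex.I * (c' * f t : ℝ)) - 1
              - Complex.I * (c' * f t : ℝ)) ∂ν := by
        refine integral_congr_ae (Eventually.of_forall fun t => ?_)
        show Real.cos (c' * f t) - 1
          = (Complex.exp (Complex.I * (c' * f t : ℝ)) - 1 - Complex.I * (c' * f t : ℝ)).re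
        rw [Complex.sub_re, Complex.sub_re, hre, Complex.one_re]
        simp
      rw [h1, integral_re (hgint c')]
      rfl
    have h1 : (ψ (2*c) - 4 * ψ c).re = (ψ (2*c)).re - 4 * (ψ c).re := by
      simp [Complex.sub_re, Complex.mul_re]
    rw [h1, hrepsi, hrepsi]
    have hint1 : Integrable (fun t => Real.cos ((2*c) * f t) - 1) ν :=
      integrable_of_bounded ((Real.measurable_cos.comp_aemeasurable
        (hfm.aemeasurable.const_mul _)).sub_const 1).aestronglyMeasurable 2
        (fun t => abs_cos_sub_one_le _)
    have hint2 : Integrable (fun t => Real.cos (c * f t) - 1) ν :=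
      integrable_of_bounded ((Real.measurable_cos.comp_aemeasurable
        (hfm.aemeasurable.const_mul _)).sub_const 1).aestronglyMeasurable 2
        (fun t => abs_cos_sub_one_le _)
    calc 2 * (∫ t, (1 - Real.cos (c * f t)) ^ 2 ∂ν)
        = ∫ t, 2 * (1 - Real.cos (c * f t)) ^ 2 ∂ν := (integral_const_mul _ _).symm
      _ = ∫ t, ((Real.cos ((2*c) * f t) - 1) - 4 * (Real.cos (c * f t) - 1)) ∂ν := by
          refine integral_congr_ae (Eventually.of_forall fun t => ?_)
          show 2 * (1 - Real.cos (c * f t)) ^ 2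
            = (Real.cos ((2*c) * f t) - 1) - 4 * (Real.cos (c * f t) - 1)
          rw [show (2*c) * f t = 2 * (c * f t) by ring, Real.cos_two_mul]
          ring
      _ = (∫ t, (Real.cos ((2*c) * f t) - 1) ∂ν) - ∫ t, 4 * (Real.cos (c * f t) - 1) ∂ν :=
          integral_sub hint1 (hint2.const_mul 4)
      _ = (∫ t, (Real.cos ((2*c) * f t) - 1) ∂ν) - 4 * ∫ t, (Real.cos (c * f t) - 1) ∂ν := by
          rw [integral_const_mul]
  have hdiff : ∀ c : ℝ, 12 * c ^ 2 * (M + 1) ≤ 1 →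
      |(∫ ω, (1 - Real.cos (c * S ω)) ^ 2 ∂μ) - ∫ t, (1 - Real.cos (c * f t)) ^ 2 ∂ν|
        ≤ 90 * (M + 1) ^ 2 * c ^ 4 := by
    intro c hc
    have hψc : ‖ψ c‖ ≤ 3 * c ^ 2 * (M + 1) := le_trans (hψnorm c) (by nlinarith [sq_nonneg c])
    have hψ2c : ‖ψ (2*c)‖ ≤ 12 * c ^ 2 * (M + 1) := by
      have := hψnorm (2*c)
      calc ‖ψ (2*c)‖ ≤ 3 * (2*c) ^ 2 * M := this
        _ ≤ 12 * c ^ 2 * (M + 1) := by nlinarith [sq_nonneg c]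
    have hψc1 : ‖ψ c‖ ≤ 1 := le_trans hψc (by nlinarith [sq_nonneg c, mul_nonneg (sq_nonneg c) hM0])
    have hψ2c1 : ‖ψ (2*c)‖ ≤ 1 := le_trans hψ2c hc
    have hEc : ‖Complex.exp (ψ c) - 1 - ψ c‖ ≤ ‖ψ c‖ ^ 2 := by
      have := Complex.norm_exp_sub_one_sub_id_le (x := ψ c) (by assumption)
      exact this
    have hE2c : ‖Complex.exp (ψ (2*c)) - 1 - ψ (2*c)‖ ≤ ‖ψ (2*c)‖ ^ 2 := by
      have := Complex.norm_exp_sub_one_sub_id_le (x := ψ (2*c)) (by assumption)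
      exact this
    have key : 2 * (∫ ω, (1 - Real.cos (c * S ω)) ^ 2 ∂μ)
        - 2 * (∫ t, (1 - Real.cos (c * f t)) ^ 2 ∂ν)
        = ((Complex.exp (ψ (2*c)) - 1 - ψ (2*c)) - 4 * (Complex.exp (ψ c) - 1 - ψ c)).re := by
      rw [hA c, hB c]
      simp [Complex.sub_re, Complex.mul_re, Complex.add_re]
      ring
    have habs : |2 * (∫ ω, (1 - Real.cos (c * S ω)) ^ 2 ∂μ)
        - 2 * (∫ t, (1 - Real.cos (c * f t)) ^ 2 ∂ν)| ≤ 180 * (M + 1) ^ 2 * c ^ 4 := by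
      rw [key]
      calc |((Complex.exp (ψ (2*c)) - 1 - ψ (2*c)) - 4 * (Complex.exp (ψ c) - 1 - ψ c)).re|
          ≤ ‖(Complex.exp (ψ (2*c)) - 1 - ψ (2*c)) - 4 * (Complex.exp (ψ c) - 1 - ψ c)‖ :=
            Complex.abs_re_le_norm _
        _ ≤ ‖Complex.exp (ψ (2*c)) - 1 - ψ (2*c)‖ + ‖(4:ℂ)‖ * ‖Complex.exp (ψ c) - 1 - ψ c‖ := by
            refine le_trans (norm_sub_le _ _) ?_
            rw [norm_mul]
        _ ≤ ‖ψ (2*c)‖ ^ 2 + 4 * ‖ψ c‖ ^ 2 := by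
            have h4 : ‖(4:ℂ)‖ = 4 := by norm_num
            rw [h4]
            have := hEc
            have := hE2c
            nlinarith [norm_nonneg (Complex.exp (ψ c) - 1 - ψ c)]
        _ ≤ (12 * c ^ 2 * (M + 1)) ^ 2 + 4 * (3 * c ^ 2 * (M + 1)) ^ 2 := by
            have h1 : ‖ψ (2*c)‖ ^ 2 ≤ (12 * c ^ 2 * (M + 1)) ^ 2 :=
              pow_le_pow_left₀ (norm_nonneg _) hψ2c 2
            have h2 : ‖ψ c‖ ^ 2 ≤ (3 * c ^ 2 * (M + 1)) ^ 2 :=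
              pow_le_pow_left₀ (norm_nonneg _) hψc 2
            linarith
        _ = 180 * (M + 1) ^ 2 * c ^ 4 := by ring
    rw [abs_sub_comm] at habs
    rw [abs_sub_comm]
    have : |2 * ((∫ t, (1 - Real.cos (c * f t)) ^ 2 ∂ν)
        - ∫ ω, (1 - Real.cos (c * S ω)) ^ 2 ∂μ)| ≤ 180 * (M + 1) ^ 2 * c ^ 4 := by
      rw [mul_sub]; exact habs
    rw [abs_mul] at this
    rw [show |(2:ℝ)| = 2 by norm_num] at this
    linarith
  have hs4iff : MemLp (fun ω => (S ω) ^ 2) 2 μ ↔ Integrable (fun ω => S ω ^ 4) μ := by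
    rw [memLp_two_iff_integrable_sq (hS.pow_const 2).aestronglyMeasurable]
    constructor <;> intro hi <;>
    · refine hi.congr ?_
      filter_upwards with ω
      ring
  have hf4iff : MemLp f 4 ν ↔ Integrable (fun t => f t ^ 4) ν := memLp4_iff_integrable hfm
  rw [hs4iff, hf4iff]
  have hev : ∀ᶠ n : ℕ in atTop, 12 * ((1:ℝ)/(n:ℝ)) ^ 2 * (M + 1) ≤ 1 := by
    have ht : Tendsto (fun n : ℕ => 12 * ((1:ℝ)/(n:ℝ)) ^ 2 * (M + 1)) atTop
        (nhds (12 * (0:ℝ) ^ 2 * (M + 1))) :=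
      ((tendsto_one_div_atTop_nhds_zero_nat.pow 2).const_mul 12).mul_const (M + 1)
    rw [show 12 * (0:ℝ) ^ 2 * (M + 1) = 0 by ring] at ht
    exact ht.eventually (eventually_le_nhds (by norm_num))
  constructor
  · -- S⁴ integrable → f⁴ integrable
    intro hS4
    set I4 : ℝ := ∫ ω, S ω ^ 4 ∂μ with hI4def
    set K : ℝ := I4 / 4 + 90 * (M + 1) ^ 2 with hKdef
    have hQle : ∀ c : ℝ, (∫ ω, (1 - Real.cos (c * S ω)) ^ 2 ∂μ) ≤ c ^ 4 / 4 * I4 := by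
      intro c
      calc (∫ ω, (1 - Real.cos (c * S ω)) ^ 2 ∂μ)
          ≤ ∫ ω, c ^ 4 / 4 * S ω ^ 4 ∂μ := by
            refine integral_mono (hQint c) (hS4.const_mul _) fun ω => ?_
            calc (1 - Real.cos (c * S ω)) ^ 2 ≤ (c * S ω) ^ 4 / 4 := one_sub_cos_sq_le _
              _ = c ^ 4 / 4 * S ω ^ 4 := by ring
        _ = c ^ 4 / 4 * I4 := integral_const_mul _ _
    have hfatou : ∫⁻ t, ENNReal.ofReal (f t ^ 4 / 4) ∂ν ≤ ENNReal.ofReal K := by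
      refine fatou_pow4 ν f hfm.aemeasurable K ?_
      filter_upwards [hev, eventually_ge_atTop 1] with n h1 h2
      have hn0 : (0:ℝ) < (n:ℝ) := by exact_mod_cast Nat.pos_of_ne_zero (by omega)
      have hint : Integrable (fun t => (n:ℝ) ^ 4 * (1 - Real.cos ((1/(n:ℝ)) * f t)) ^ 2) ν :=
        (hqint (1/(n:ℝ))).const_mul _
      rw [← ofReal_integral_eq_lintegral_ofReal hint
        (Eventually.of_forall fun t => by positivity)]
      apply ENNReal.ofReal_le_ofReal
      rw [integral_const_mul]
      have hd := hdiff (1/(n:ℝ)) h1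
      have hQ := hQle (1/(n:ℝ))
      have habs := abs_le.mp hd
      have hqb : (∫ t, (1 - Real.cos ((1/(n:ℝ)) * f t)) ^ 2 ∂ν) ≤ (1/(n:ℝ)) ^ 4 * K := by
        have hexp : (1/(n:ℝ)) ^ 4 * K
            = (1/(n:ℝ)) ^ 4 / 4 * I4 + 90 * (M + 1) ^ 2 * (1/(n:ℝ)) ^ 4 := by
          rw [hKdef]; ring
        linarith [habs.1, habs.2]
      calc (n:ℝ) ^ 4 * ∫ t, (1 - Real.cos ((1/(n:ℝ)) * f t)) ^ 2 ∂ν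
          ≤ (n:ℝ) ^ 4 * ((1/(n:ℝ)) ^ 4 * K) :=
            mul_le_mul_of_nonneg_left hqb (by positivity)
        _ = K := by field_simp
    have hlt : ∫⁻ t, ENNReal.ofReal (f t ^ 4) ∂ν < ⊤ := by
      calc ∫⁻ t, ENNReal.ofReal (f t ^ 4) ∂ν
          = ∫⁻ t, ENNReal.ofReal 4 * ENNReal.ofReal (f t ^ 4 / 4) ∂ν := by
            refine lintegral_congr fun t => ?_
            rw [← ENNReal.ofReal_mul (by norm_num)]
            ring_nf
        _ = ENNReal.ofReal 4 * ∫⁻ t, ENNReal.ofReal (f t ^ 4 / 4) ∂ν :=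
            lintegral_const_mul' _ _ (by simp)
        _ ≤ ENNReal.ofReal 4 * ENNReal.ofReal K := mul_le_mul_right hfatou _
        _ < ⊤ := ENNReal.mul_lt_top ENNReal.ofReal_lt_top ENNReal.ofReal_lt_top
    refine ⟨(hfm.aemeasurable.pow_const 4).aestronglyMeasurable, ?_⟩
    rw [hasFiniteIntegral_iff_ofReal (Eventually.of_forall fun t => by positivity)]
    exact hlt
  · -- f⁴ integrable → S⁴ integrable
    intro hf4
    set J : ℝ := ∫ t, f t ^ 4 ∂ν with hJdef
    set K : ℝ := J / 4 + 90 * (M + 1) ^ 2 with hKdef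
    have hqle : ∀ c : ℝ, (∫ t, (1 - Real.cos (c * f t)) ^ 2 ∂ν) ≤ c ^ 4 / 4 * J := by
      intro c
      calc (∫ t, (1 - Real.cos (c * f t)) ^ 2 ∂ν)
          ≤ ∫ t, c ^ 4 / 4 * f t ^ 4 ∂ν := by
            refine integral_mono (hqint c) (hf4.const_mul _) fun t => ?_
            calc (1 - Real.cos (c * f t)) ^ 2 ≤ (c * f t) ^ 4 / 4 := one_sub_cos_sq_le _
              _ = c ^ 4 / 4 * f t ^ 4 := by ring
        _ = c ^ 4 / 4 * J := integral_const_mul _ _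
    have hfatou : ∫⁻ ω, ENNReal.ofReal (S ω ^ 4 / 4) ∂μ ≤ ENNReal.ofReal K := by
      refine fatou_pow4 μ S hS.aemeasurable K ?_
      filter_upwards [hev, eventually_ge_atTop 1] with n h1 h2
      have hn0 : (0:ℝ) < (n:ℝ) := by exact_mod_cast Nat.pos_of_ne_zero (by omega)
      have hint : Integrable (fun ω => (n:ℝ) ^ 4 * (1 - Real.cos ((1/(n:ℝ)) * S ω)) ^ 2) μ :=
        (hQint (1/(n:ℝ))).const_mul _
      rw [← ofReal_integral_eq_lintegral_ofReal hint
        (Eventually.of_forall fun ω => by positivity)]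
      apply ENNReal.ofReal_le_ofReal
      rw [integral_const_mul]
      have hd := hdiff (1/(n:ℝ)) h1
      have hq := hqle (1/(n:ℝ))
      have habs := abs_le.mp hd
      have hQb : (∫ ω, (1 - Real.cos ((1/(n:ℝ)) * S ω)) ^ 2 ∂μ) ≤ (1/(n:ℝ)) ^ 4 * K := by
        have hexp : (1/(n:ℝ)) ^ 4 * K
            = (1/(n:ℝ)) ^ 4 / 4 * J + 90 * (M + 1) ^ 2 * (1/(n:ℝ)) ^ 4 := by
          rw [hKdef]; ring
        linarith [habs.1, habs.2]
      calc (n:ℝ) ^ 4 * ∫ ω, (1 - Real.cos ((1/(n:ℝ)) * S ω)) ^ 2 ∂μ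
          ≤ (n:ℝ) ^ 4 * ((1/(n:ℝ)) ^ 4 * K) :=
            mul_le_mul_of_nonneg_left hQb (by positivity)
        _ = K := by field_simp
    have hlt : ∫⁻ ω, ENNReal.ofReal (S ω ^ 4) ∂μ < ⊤ := by
      calc ∫⁻ ω, ENNReal.ofReal (S ω ^ 4) ∂μ
          = ∫⁻ ω, ENNReal.ofReal 4 * ENNReal.ofReal (S ω ^ 4 / 4) ∂μ := by
            refine lintegral_congr fun ω => ?_
            rw [← ENNReal.ofReal_mul (by norm_num)]
            ring_nf
        _ = ENNReal.ofReal 4 * ∫⁻ ω, ENNReal.ofReal (S ω ^ 4 / 4) ∂μ :=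
            lintegral_const_mul' _ _ (by simp)
        _ ≤ ENNReal.ofReal 4 * ENNReal.ofReal K := mul_le_mul_right hfatou _
        _ < ⊤ := ENNReal.mul_lt_top ENNReal.ofReal_lt_top ENNReal.ofReal_lt_top
    refine ⟨(hS.pow_const 4).aestronglyMeasurable, ?_⟩
    rw [hasFiniteIntegral_iff_ofReal (Eventually.of_forall fun ω => by positivity)]
    exact hlt
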